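/- Let P : ℕ → ℝ be a sequence of expected partitioning costs with P(0) = P(1) = 0, and suppose there exist constants A > 0 and d ∈ ℕ with |P(n)| ≤ A·(n+1)^d for all n. Let C be the dual-pivot quickselect cost array defined from P by the standard recurrence. Then for every real z with |z| < 1 the series F(z) = ∑_{n≥0} (∑_{j=1}^n C(n,j))·z^n and G(z) = ∑_{n≥2} n²(n−1)·P(n)·z^{n−2} converge absolutely, the function F is twice differentiable on (−1,1), and for all z ∈ (−1,1) one has F''(z) = G(z) + (6/(1−z)²)·F(z). -/

import Mathlib

open Finset

/-- Harmonic numbers `H_n = ∑_{k=1}^n 1/k`. -/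
noncomputable def H (n : ℕ) : ℝ := ∑ k ∈ Finset.Icc 1 n, (1 : ℝ) / k

/-- Alternating harmonic numbers `H^alt_n = ∑_{k=1}^n (-1)^k/k`. -/
noncomputable def Halt (n : ℕ) : ℝ := ∑ k ∈ Finset.Icc 1 n, (-1 : ℝ) ^ k / k

/-- The dual-pivot quickselect cost array defined from expected partitioning
costs `P` by the standard recurrence:  `C(n,j) = 0` whenever `n ≤ 1` or `j < 1`
or `j > n`; and for `n ≥ 2` and `1 ≤ j ≤ n`,
`C(n,j) = P(n) + (2/(n(n−1)))·( ∑_{s=j}^{n−2} (n−1−s)·C(s,j)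
  + ∑_{m=1}^{n−2} ∑_{s=max(0,j−m−1)}^{min(j−2, n−m−2)} C(m, j−s−1)
  + ∑_{ℓ=n−j+1}^{n−2} (n−1−ℓ)·C(ℓ, n−j+1) )`.
(The `attach` is only needed for the termination proof.) -/
noncomputable def qsCost (P : ℕ → ℝ) : ℕ → ℤ → ℝ
  | n, j =>
    if n ≤ 1 ∨ j < 1 ∨ (n : ℤ) < j then 0
    else
      P n + 2 / ((n : ℝ) * ((n : ℝ) - 1)) *
        ((∑ s ∈ (Finset.Icc j.toNat (n - 2)).attach,
            ((n : ℝ) - 1 - (s : ℕ)) * qsCost P (s : ℕ) j) +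
         (∑ m ∈ (Finset.Icc 1 (n - 2)).attach,
            ∑ s ∈ Finset.Icc (max 0 (j - ((m : ℕ) : ℤ) - 1))
                (min (j - 2) ((n : ℤ) - ((m : ℕ) : ℤ) - 2)),
              qsCost P (m : ℕ) (j - s - 1)) +
         (∑ l ∈ (Finset.Icc ((n : ℤ) - j + 1).toNat (n - 2)).attach,
            ((n : ℝ) - 1 - (l : ℕ)) * qsCost P (l : ℕ) ((n : ℤ) - j + 1)))
  termination_by n j => n
  decreasing_by
    · have hs := s.2; simp only [Finset.mem_Icc] at hs; omega
    · have hm := m.2; simp only [Finset.mem_Icc] at hm; omega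
    · have hl := l.2; simp only [Finset.mem_Icc] at hl; omega


lemma summable_poly_geo (k : ℕ) {r : ℝ} (hr : |r| < 1) :
    Summable fun n : ℕ => ((n : ℝ) + 1) ^ k * r ^ n := by
  have habs : |(|r|)| < 1 := by rwa [abs_abs]
  have h1 : Summable fun n : ℕ => (n : ℝ) ^ k * |r| ^ n :=
    summable_pow_mul_geometric_of_norm_lt_one k (by rwa [Real.norm_eq_abs])
  have h2 : Summable fun n : ℕ => |r| ^ n := summable_geometric_of_abs_lt_one habs
  have h3 : Summable fun n : ℕ => (2:ℝ)^k * ((n : ℝ) ^ k * |r| ^ n + |r| ^ n) :=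
    (h1.add h2).mul_left _
  refine Summable.of_norm_bounded h3 fun n => ?_
  rw [Real.norm_eq_abs, abs_mul, abs_pow, abs_pow]
  have hn1 : |(n : ℝ) + 1| = (n : ℝ) + 1 := abs_of_nonneg (by positivity)
  rw [hn1]
  have key : ((n : ℝ) + 1) ^ k ≤ 2 ^ k * ((n:ℝ) ^ k + 1) := by
    rcases Nat.eq_zero_or_pos n with h | h
    · subst h; simp; nlinarith [one_le_pow₀ (by norm_num : (1:ℝ) ≤ 2) (n := k), pow_nonneg (le_refl (0:ℝ)) k]
    · have h1 : ((n:ℝ) + 1) ^ k ≤ (2 * n) ^ k := by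
        apply pow_le_pow_left₀ (by positivity)
        have : (1:ℝ) ≤ n := by exact_mod_cast h
        linarith
      calc ((n:ℝ) + 1) ^ k ≤ (2 * n) ^ k := h1
        _ = 2 ^ k * (n:ℝ) ^ k := by rw [mul_pow]
        _ ≤ 2 ^ k * ((n:ℝ) ^ k + 1) := by nlinarith [pow_pos (by norm_num : (0:ℝ) < 2) k]
  have hrp : (0:ℝ) ≤ |r| ^ n := by positivity
  nlinarith [mul_le_mul_of_nonneg_right key hrp]

lemma summable_poly_geo_abs (k : ℕ) {r : ℝ} (hr : |r| < 1) :
    Summable fun n : ℕ => ((n : ℝ) + 1) ^ k * |r| ^ n :=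
  summable_poly_geo k (by rwa [abs_abs])


-- summability of coefficients times powers, given poly bound
lemma summable_coeff_pow {a : ℕ → ℝ} {Cb : ℝ} {K : ℕ}
    (ha : ∀ n : ℕ, |a n| ≤ Cb * ((n : ℝ) + 1) ^ K) {y : ℝ} (hy : |y| < 1) :
    Summable fun n : ℕ => |a n * y ^ n| := by
  refine Summable.of_nonneg_of_le (fun n => abs_nonneg _) (fun n => ?_)
    (((summable_poly_geo K (by rwa [abs_abs] : |(|y|)| < 1)).mul_left Cb))
  rw [abs_mul, abs_pow]
  have h1 : |y| ^ n ≤ |y| ^ n := le_refl _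
  calc |a n| * |y| ^ n ≤ (Cb * ((n : ℝ) + 1) ^ K) * |y| ^ n := by
        apply mul_le_mul_of_nonneg_right (ha n) (by positivity)
    _ = Cb * (((n : ℝ) + 1) ^ K * |y| ^ n) := by ring

lemma hasDerivAt_ptsum {a : ℕ → ℝ} {Cb : ℝ} {K : ℕ} (hC : 0 ≤ Cb)
    (ha : ∀ n : ℕ, |a n| ≤ Cb * ((n : ℝ) + 1) ^ K) {z : ℝ} (hz : |z| < 1) :
    HasDerivAt (fun y : ℝ => ∑' n, a n * y ^ n)
      (∑' n : ℕ, ((n : ℝ) + 1) * a (n + 1) * z ^ n) z := by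
  set r : ℝ := (|z| + 1) / 2 with hrdef
  have hzr : |z| < r := by simp only [hrdef]; linarith
  have hr1 : r < 1 := by simp only [hrdef]; linarith
  have hr0 : 0 < r := by have := abs_nonneg z; simp only [hrdef]; linarith
  have hrabs : |r| < 1 := by rwa [abs_of_pos hr0]
  -- the summable majorant for the derivative series
  have hu : Summable fun n : ℕ => Cb / r * (((n : ℝ) + 1) ^ (K + 1) * r ^ n) :=
    (summable_poly_geo (K + 1) hrabs).mul_left _
  -- bound on the derivative terms
  have hbound : ∀ (n : ℕ) (y : ℝ), y ∈ Metric.ball (0:ℝ) r →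
      ‖a n * ((n : ℝ) * y ^ (n - 1))‖ ≤ Cb / r * (((n : ℝ) + 1) ^ (K + 1) * r ^ n) := by
    intro n y hy
    rw [Metric.mem_ball, Real.dist_eq, sub_zero] at hy
    rw [Real.norm_eq_abs, abs_mul, abs_mul, abs_pow]
    have h1 : |a n| * (|(n : ℝ)| * |y| ^ (n - 1)) ≤
        (Cb * ((n : ℝ) + 1) ^ K) * (((n:ℝ) + 1) * r ^ (n - 1)) := by
      apply mul_le_mul (ha n) ?_ (by positivity) (mul_nonneg hC (by positivity))
      apply mul_le_mul ?_ ?_ (by positivity) (by positivity)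
      · rw [Nat.abs_cast]; linarith
      · exact pow_le_pow_left₀ (abs_nonneg y) hy.le _
    have h2 : r ^ (n - 1) ≤ r ^ n / r := by
      rcases Nat.eq_zero_or_pos n with h | h
      · subst h; simp
        have h' : r * r⁻¹ = 1 := mul_inv_cancel₀ hr0.ne'
        nlinarith
      · have hne : r ^ n = r ^ (n - 1) * r := by
          rw [← pow_succ]; congr 1; omega
        rw [hne, mul_div_cancel_right₀ _ hr0.ne']
    calc |a n| * (|(n : ℝ)| * |y| ^ (n - 1))
        ≤ (Cb * ((n : ℝ) + 1) ^ K) * (((n:ℝ) + 1) * r ^ (n - 1)) := h1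
      _ ≤ (Cb * ((n : ℝ) + 1) ^ K) * (((n:ℝ) + 1) * (r ^ n / r)) := by
          apply mul_le_mul_of_nonneg_left ?_ (mul_nonneg hC (by positivity))
          exact mul_le_mul_of_nonneg_left h2 (by positivity)
      _ = Cb / r * (((n : ℝ) + 1) ^ (K + 1) * r ^ n) := by
          rw [pow_succ]; field_simp
  have key : HasDerivAt (fun y : ℝ => ∑' n, a n * y ^ n)
      (∑' n, a n * ((n : ℝ) * z ^ (n - 1))) z := by
    apply hasDerivAt_of_tendstoUniformlyOn (Metric.isOpen_ball : IsOpen (Metric.ball (0:ℝ) r))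
      (tendstoUniformlyOn_tsum_nat hu hbound)
    · filter_upwards with N y hy
      apply HasDerivAt.sum
      intro n hn
      exact (hasDerivAt_pow n y).const_mul (a n)
    · intro y hy
      rw [Metric.mem_ball, Real.dist_eq, sub_zero] at hy
      have : Summable fun n : ℕ => a n * y ^ n :=
        (summable_coeff_pow ha (lt_trans hy hr1)).of_abs
      simpa only [Finset.sum_apply] using this.hasSum.tendsto_sum_nat
    · rwa [Metric.mem_ball, Real.dist_eq, sub_zero]
  convert key using 1
  have hsum : Summable fun n : ℕ => a n * ((n : ℝ) * z ^ (n - 1)) := by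
    apply Summable.of_norm
    exact Summable.of_nonneg_of_le (fun n => norm_nonneg _)
      (fun n => hbound n z (by rwa [Metric.mem_ball, Real.dist_eq, sub_zero])) hu
  rw [Summable.tsum_eq_zero_add hsum]
  simp only [Nat.cast_zero, zero_mul, mul_zero, zero_add, Nat.cast_add, Nat.cast_one,
    Nat.add_sub_cancel]
  apply tsum_congr
  intro n
  push_cast
  ring

noncomputable def Tc (P : ℕ → ℝ) (n : ℕ) : ℝ := ∑ j ∈ Finset.Icc (1:ℤ) (n:ℤ), qsCost P n j

lemma qsCost_zero {P : ℕ → ℝ} {n : ℕ} {j : ℤ} (h : n ≤ 1 ∨ j < 1 ∨ (n : ℤ) < j) :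
    qsCost P n j = 0 := by
  rw [qsCost]
  simp [h]

lemma qsCost_spec {P : ℕ → ℝ} {n : ℕ} {j : ℤ} (hn : 2 ≤ n) (hj1 : 1 ≤ j) (hjn : j ≤ (n:ℤ)) :
    qsCost P n j =
      P n + 2 / ((n : ℝ) * ((n : ℝ) - 1)) *
        ((∑ s ∈ Finset.Icc j.toNat (n - 2), ((n : ℝ) - 1 - (s : ℕ)) * qsCost P s j) +
         (∑ m ∈ Finset.Icc 1 (n - 2),
            ∑ s ∈ Finset.Icc (max 0 (j - (m : ℤ) - 1)) (min (j - 2) ((n : ℤ) - (m : ℤ) - 2)),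
              qsCost P m (j - s - 1)) +
         (∑ l ∈ Finset.Icc ((n : ℤ) - j + 1).toNat (n - 2),
            ((n : ℝ) - 1 - (l : ℕ)) * qsCost P l ((n : ℤ) - j + 1))) := by
  rw [qsCost]
  rw [if_neg (by push_neg; omega)]
  rw [Finset.sum_attach _ (fun (s : ℕ) => ((n : ℝ) - 1 - (s : ℕ)) * qsCost P s j),
    Finset.sum_attach _ (fun (m : ℕ) => ∑ s ∈ Finset.Icc (max 0 (j - (m : ℤ) - 1)) (min (j - 2) ((n : ℤ) - (m : ℤ) - 2)), qsCost P m (j - s - 1)),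
    Finset.sum_attach _ (fun (l : ℕ) => ((n : ℝ) - 1 - (l : ℕ)) * qsCost P l ((n : ℤ) - j + 1))]

lemma Tc_small {P : ℕ → ℝ} {n : ℕ} (h : n ≤ 1) : Tc P n = 0 := by
  unfold Tc
  apply Finset.sum_eq_zero
  intro j hj
  exact qsCost_zero (Or.inl h)

lemma sumS1 (P : ℕ → ℝ) {n : ℕ} (hn : 2 ≤ n) :
    ∑ j ∈ Finset.Icc (1:ℤ) (n:ℤ), ∑ s ∈ Finset.Icc j.toNat (n-2),
        ((n:ℝ) - 1 - (s:ℕ)) * qsCost P s j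
      = ∑ m ∈ Finset.Icc 0 (n-2), ((n:ℝ) - 1 - (m:ℕ)) * Tc P m := by
  have step1 : ∀ j ∈ Finset.Icc (1:ℤ) (n:ℤ),
      ∑ s ∈ Finset.Icc j.toNat (n-2), ((n:ℝ) - 1 - (s:ℕ)) * qsCost P s j
        = ∑ s ∈ Finset.Icc 0 (n-2), ((n:ℝ) - 1 - (s:ℕ)) * qsCost P s j := by
    intro j hj
    rw [Finset.mem_Icc] at hj
    apply Finset.sum_subset
    · intro x hx; rw [Finset.mem_Icc] at *; omega
    · intro x hx hxn
      rw [Finset.mem_Icc] at hx hxn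
      have hxj : (x:ℤ) < j := by
        have : x < j.toNat := by omega
        omega
      rw [qsCost_zero (Or.inr (Or.inr hxj)), mul_zero]
  rw [Finset.sum_congr rfl step1, Finset.sum_comm]
  apply Finset.sum_congr rfl
  intro s hs
  rw [Finset.mem_Icc] at hs
  rw [← Finset.mul_sum]
  congr 1
  unfold Tc
  symm
  apply Finset.sum_subset
  · intro x hx; rw [Finset.mem_Icc] at *; omega
  · intro x hx hxn
    rw [Finset.mem_Icc] at hx hxn
    exact qsCost_zero (by omega)

lemma sumS3 (P : ℕ → ℝ) {n : ℕ} (hn : 2 ≤ n) :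
    ∑ j ∈ Finset.Icc (1:ℤ) (n:ℤ), ∑ l ∈ Finset.Icc ((n:ℤ) - j + 1).toNat (n-2),
        ((n:ℝ) - 1 - (l:ℕ)) * qsCost P l ((n:ℤ) - j + 1)
      = ∑ m ∈ Finset.Icc 0 (n-2), ((n:ℝ) - 1 - (m:ℕ)) * Tc P m := by
  rw [← sumS1 P hn]
  apply Finset.sum_nbij' (i := fun j => (n:ℤ) + 1 - j) (j := fun j => (n:ℤ) + 1 - j)
  · intro a ha; rw [Finset.mem_Icc] at *; omega
  · intro a ha; rw [Finset.mem_Icc] at *; omega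
  · intro a _; ring
  · intro a _; ring
  · intro a ha
    have h1 : (n:ℤ) - a + 1 = (n:ℤ) + 1 - a := by ring
    rw [h1]

lemma sumS2 (P : ℕ → ℝ) {n : ℕ} (hn : 2 ≤ n) :
    ∑ j ∈ Finset.Icc (1:ℤ) (n:ℤ), ∑ m ∈ Finset.Icc 1 (n-2),
        ∑ s ∈ Finset.Icc (max 0 (j - (m:ℕ) - 1)) (min (j - 2) ((n:ℤ) - (m:ℕ) - 2)),
          qsCost P m (j - s - 1)
      = ∑ m ∈ Finset.Icc 1 (n-2), ((n:ℝ) - 1 - (m:ℕ)) * Tc P m := by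
  rw [Finset.sum_comm]
  apply Finset.sum_congr rfl
  intro m hm
  rw [Finset.mem_Icc] at hm
  have hmn : m + 2 ≤ n := by omega
  have step1 : ∀ j ∈ Finset.Icc (1:ℤ) (n:ℤ),
      ∑ s ∈ Finset.Icc (max 0 (j - (m:ℕ) - 1)) (min (j - 2) ((n:ℤ) - (m:ℕ) - 2)),
          qsCost P m (j - s - 1)
        = ∑ s ∈ Finset.Icc (0:ℤ) ((n:ℤ) - (m:ℕ) - 2), qsCost P m (j - s - 1) := by
    intro j hj
    rw [Finset.mem_Icc] at hj
    apply Finset.sum_subset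
    · intro x hx; rw [Finset.mem_Icc] at *; omega
    · intro x hx hxn
      rw [Finset.mem_Icc] at hx hxn
      apply qsCost_zero
      omega
  rw [Finset.sum_congr rfl step1, Finset.sum_comm]
  have step2 : ∀ s ∈ Finset.Icc (0:ℤ) ((n:ℤ) - (m:ℕ) - 2),
      ∑ j ∈ Finset.Icc (1:ℤ) (n:ℤ), qsCost P m (j - s - 1) = Tc P m := by
    intro s hs
    rw [Finset.mem_Icc] at hs
    have hmap : Finset.Icc (1:ℤ) (n:ℤ) =
        Finset.map (addRightEmbedding (s+1)) (Finset.Icc (-s) ((n:ℤ) - s - 1)) := by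
      rw [Finset.map_add_right_Icc]
      congr 1 <;> ring
    rw [hmap, Finset.sum_map]
    have hcong : ∀ x ∈ Finset.Icc (-s) ((n:ℤ) - s - 1),
        qsCost P m ((addRightEmbedding (s+1)) x - s - 1) = qsCost P m x := by
      intro x _
      congr 1
      simp [addRightEmbedding]
      ring
    rw [Finset.sum_congr rfl hcong]
    unfold Tc
    symm
    apply Finset.sum_subset
    · intro x hx; rw [Finset.mem_Icc] at *; omega
    · intro x hx hxn
      rw [Finset.mem_Icc] at hx hxn
      exact qsCost_zero (by omega)
  rw [Finset.sum_congr rfl step2, Finset.sum_const, Int.card_Icc]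
  have hcard : ((n:ℤ) - (m:ℕ) - 2 + 1 - 0).toNat = n - m - 1 := by omega
  rw [hcard, nsmul_eq_mul]
  congr 1
  push_cast [Nat.cast_sub (by omega : 1 ≤ n - m), Nat.cast_sub (by omega : m ≤ n)]
  ring

lemma Tc_rec (P : ℕ → ℝ) {n : ℕ} (hn : 2 ≤ n) :
    Tc P n = (n:ℝ) * P n + 2 / ((n:ℝ) * ((n:ℝ) - 1)) *
      (3 * ∑ m ∈ Finset.Icc 0 (n-2), ((n:ℝ) - 1 - (m:ℕ)) * Tc P m) := by
  have hspec : ∀ j ∈ Finset.Icc (1:ℤ) (n:ℤ), qsCost P n j =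
      P n + 2 / ((n : ℝ) * ((n : ℝ) - 1)) *
        ((∑ s ∈ Finset.Icc j.toNat (n - 2), ((n : ℝ) - 1 - (s : ℕ)) * qsCost P s j) +
         (∑ m ∈ Finset.Icc 1 (n - 2),
            ∑ s ∈ Finset.Icc (max 0 (j - (m : ℤ) - 1)) (min (j - 2) ((n : ℤ) - (m : ℤ) - 2)),
              qsCost P m (j - s - 1)) +
         (∑ l ∈ Finset.Icc ((n : ℤ) - j + 1).toNat (n - 2),
            ((n : ℝ) - 1 - (l : ℕ)) * qsCost P l ((n : ℤ) - j + 1))) := by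
    intro j hj
    rw [Finset.mem_Icc] at hj
    exact qsCost_spec hn hj.1 hj.2
  rw [show Tc P n = ∑ j ∈ Finset.Icc (1:ℤ) (n:ℤ), qsCost P n j from rfl]
  rw [Finset.sum_congr rfl hspec, Finset.sum_add_distrib, Finset.sum_const, Int.card_Icc,
    ← Finset.mul_sum, Finset.sum_add_distrib, Finset.sum_add_distrib,
    sumS1 P hn, sumS2 P hn, sumS3 P hn]
  have hS2 : ∑ m ∈ Finset.Icc 1 (n-2), ((n:ℝ) - 1 - (m:ℕ)) * Tc P m
      = ∑ m ∈ Finset.Icc 0 (n-2), ((n:ℝ) - 1 - (m:ℕ)) * Tc P m := by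
    apply Finset.sum_subset
    · intro x hx; rw [Finset.mem_Icc] at *; omega
    · intro x hx hxn
      rw [Finset.mem_Icc] at hx hxn
      have : x = 0 := by omega
      rw [this, Tc_small (by norm_num), mul_zero]
  rw [hS2]
  have hcard : ((n:ℤ) + 1 - 1).toNat = n := by omega
  rw [hcard, nsmul_eq_mul]
  ring

lemma Tc_key (P : ℕ → ℝ) (n : ℕ) :
    ((n:ℝ) + 2) * ((n:ℝ) + 1) * Tc P (n+2) =
      ((n:ℝ) + 2) ^ 2 * ((n:ℝ) + 1) * P (n+2) +
        6 * ∑ m ∈ Finset.range (n+1), ((n:ℝ) + 1 - (m:ℕ)) * Tc P m := by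
  have h2 : 2 ≤ n + 2 := by omega
  have hr := Tc_rec P h2
  have hIcc : Finset.Icc 0 (n+2-2) = Finset.range (n+1) := by
    ext x; simp [Finset.mem_Icc, Finset.mem_range]
  rw [hIcc] at hr
  have hcast : ((n+2 : ℕ) : ℝ) = (n:ℝ) + 2 := by push_cast; ring
  rw [hcast] at hr
  have hco : ∀ m ∈ Finset.range (n+1), ((n:ℝ) + 2 - 1 - (m:ℕ)) * Tc P m
      = ((n:ℝ) + 1 - (m:ℕ)) * Tc P m := by
    intro m _; ring_nf
  rw [Finset.sum_congr rfl hco] at hr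
  have hne : ((n:ℝ) + 2) * (((n:ℝ) + 2) - 1) ≠ 0 := by
    have hn0 : (0:ℝ) ≤ n := Nat.cast_nonneg n
    nlinarith
  rw [show (n:ℝ) + 2 - 1 = (n:ℝ) + 1 by ring] at hr
  rw [hr]
  field_simp
  ring

lemma sum_sq_real (n : ℕ) :
    ∑ i ∈ Finset.range n, ((i:ℝ))^2 = (n:ℝ)*((n:ℝ)-1)*(2*(n:ℝ)-1)/6 := by
  induction n with
  | zero => simp
  | succ n ih => rw [Finset.sum_range_succ, ih]; push_cast; ring

lemma sum_wsq_real (n : ℕ) :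
    ∑ i ∈ Finset.range n, ((n:ℝ) - (i:ℝ)) * (i:ℝ)^2
      = (n:ℝ)^2*((n:ℝ)-1)*((n:ℝ)+1)/12 := by
  induction n with
  | zero => simp
  | succ n ih =>
    have h : ∑ i ∈ Finset.range (n+1), (((n:ℕ)+1 : ℝ) - (i:ℝ)) * (i:ℝ)^2
        = (∑ i ∈ Finset.range (n+1), ((n:ℝ) - (i:ℝ)) * (i:ℝ)^2)
          + ∑ i ∈ Finset.range (n+1), (i:ℝ)^2 := by
      rw [← Finset.sum_add_distrib]
      apply Finset.sum_congr rfl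
      intro i _; ring
    push_cast at h ⊢
    rw [h, Finset.sum_range_succ, ih, sum_sq_real (n+1)]
    push_cast; ring

lemma conv_bound {n : ℕ} (hn : 2 ≤ n) {K : ℕ} (hK : 2 ≤ K) {B : ℝ} (hB : 0 ≤ B)
    {g : ℕ → ℝ} (hg : ∀ m, m < n → |g m| ≤ B * ((m:ℝ)+1)^K) :
    |∑ m ∈ Finset.Icc 0 (n-2), ((n:ℝ) - 1 - (m:ℕ)) * g m|
      ≤ B * (n:ℝ)^2*((n:ℝ)-1)*((n:ℝ)+1)^(K-1)/12 := by
  have habs : |∑ m ∈ Finset.Icc 0 (n-2), ((n:ℝ) - 1 - (m:ℕ)) * g m|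
      ≤ ∑ m ∈ Finset.Icc 0 (n-2), ((n:ℝ) - 1 - (m:ℕ)) * (B * ((m:ℝ)+1)^K) := by
    refine (Finset.abs_sum_le_sum_abs _ _).trans (Finset.sum_le_sum fun m hm => ?_)
    rw [Finset.mem_Icc] at hm
    have hpos : (0:ℝ) ≤ (n:ℝ) - 1 - (m:ℕ) := by
      have h1 : ((m:ℕ):ℝ) ≤ (n:ℝ) - 2 := by
        have : (m:ℕ) ≤ n - 2 := hm.2
        have h2 : ((m:ℕ):ℝ) ≤ ((n-2 : ℕ):ℝ) := by exact_mod_cast this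
        have h3 : ((n-2:ℕ):ℝ) = (n:ℝ) - 2 := by
          have : (2:ℕ) ≤ n := hn
          push_cast [Nat.cast_sub this]; ring
        linarith [h3 ▸ h2]
      linarith
    rw [abs_mul, abs_of_nonneg hpos]
    exact mul_le_mul_of_nonneg_left (hg m (by omega)) hpos
  refine habs.trans ?_
  -- bound (m+1)^K by (m+1)^2 * (n+1)^(K-2)
  have hstep : ∑ m ∈ Finset.Icc 0 (n-2), ((n:ℝ) - 1 - (m:ℕ)) * (B * ((m:ℝ)+1)^K)
      ≤ B * ((n:ℝ)+1)^(K-2) * ∑ m ∈ Finset.Icc 0 (n-2), ((n:ℝ) - 1 - (m:ℕ)) * ((m:ℝ)+1)^2 := by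
    rw [Finset.mul_sum]
    apply Finset.sum_le_sum
    intro m hm
    rw [Finset.mem_Icc] at hm
    have hm2 : (m:ℝ) + 1 ≤ (n:ℝ) + 1 := by
      have : m ≤ n := by omega
      have := (Nat.cast_le (α := ℝ)).2 this
      linarith
    have hpos : (0:ℝ) ≤ (n:ℝ) - 1 - (m:ℕ) := by
      have : m + 2 ≤ n := by omega
      have := (Nat.cast_le (α := ℝ)).2 this
      push_cast at this
      linarith
    have hKsplit : ((m:ℝ)+1)^K = ((m:ℝ)+1)^2 * ((m:ℝ)+1)^(K-2) := by
      rw [← pow_add]; congr 1; omega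
    have hle : ((m:ℝ)+1)^(K-2) ≤ ((n:ℝ)+1)^(K-2) :=
      pow_le_pow_left₀ (by positivity) hm2 _
    calc ((n:ℝ) - 1 - (m:ℕ)) * (B * ((m:ℝ)+1)^K)
        =B * (((n:ℝ) - 1 - (m:ℕ)) * ((m:ℝ)+1)^2) * ((m:ℝ)+1)^(K-2) := by
          rw [hKsplit]; ring
      _ ≤ B * (((n:ℝ) - 1 - (m:ℕ)) * ((m:ℝ)+1)^2) * ((n:ℝ)+1)^(K-2) := by
          apply mul_le_mul_of_nonneg_left hle
          apply mul_nonneg hB (mul_nonneg hpos (by positivity))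
      _ = B * ((n:ℝ)+1)^(K-2) * (((n:ℝ) - 1 - (m:ℕ)) * ((m:ℝ)+1)^2) := by ring
  refine hstep.trans ?_
  -- compute the quadratic convolution sum
  have hsum : ∑ m ∈ Finset.Icc 0 (n-2), ((n:ℝ) - 1 - (m:ℕ)) * ((m:ℝ)+1)^2
      = (n:ℝ)^2*((n:ℝ)-1)*((n:ℝ)+1)/12 := by
    have hrange : Finset.Icc 0 (n-2) = Finset.range (n-1) := by
      ext x; simp [Finset.mem_Icc, Finset.mem_range]; omega
    rw [hrange]
    have hre : ∑ m ∈ Finset.range (n-1), ((n:ℝ) - 1 - (m:ℕ)) * ((m:ℝ)+1)^2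
        = ∑ i ∈ Finset.range n, ((n:ℝ) - (i:ℝ)) * (i:ℝ)^2 := by
      have hn1 : n = (n-1) + 1 := by omega
      rw [hn1, Finset.sum_range_succ']
      simp only [Nat.cast_add, Nat.cast_one, Nat.cast_zero]
      rw [← hn1]
      have : ((0:ℝ))^2 = 0 := by norm_num
      rw [this, mul_zero, add_zero]
      apply Finset.sum_congr rfl
      intro i _
      push_cast
      ring
    rw [hre, sum_wsq_real]
  rw [hsum]
  have h1 : (0:ℝ) ≤ ((n:ℝ)+1)^(K-2) := by positivity
  have h2 : ((n:ℝ)+1)^(K-2) * ((n:ℝ)+1) = ((n:ℝ)+1)^(K-1) := by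
    rw [← pow_succ]; congr 1; omega
  apply le_of_eq
  calc B * ((n:ℝ)+1)^(K-2) * ((n:ℝ)^2*((n:ℝ)-1)*((n:ℝ)+1)/12)
      = B * (n:ℝ)^2*((n:ℝ)-1)*(((n:ℝ)+1)^(K-2) * ((n:ℝ)+1))/12 := by ring
    _ = B * (n:ℝ)^2*((n:ℝ)-1)*((n:ℝ)+1)^(K-1)/12 := by rw [h2]

lemma Tc_bound (P : ℕ → ℝ) (A : ℝ) (hA : 0 < A) (d : ℕ)
    (hPb : ∀ n : ℕ, |P n| ≤ A * ((n:ℝ)+1)^d) :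
    ∀ n : ℕ, |Tc P n| ≤ (2*A) * ((n:ℝ)+1)^(d+3) := by
  intro n
  induction n using Nat.strong_induction_on with
  | _ n ih =>
    rcases le_or_gt n 1 with h1 | h1
    · rw [Tc_small h1, abs_zero]; positivity
    · have hn : 2 ≤ n := h1
      have hn0 : (0:ℝ) < n := by exact_mod_cast Nat.lt_of_lt_of_le Nat.zero_lt_two hn
      have hn1 : (1:ℝ) < n := by
        have := (Nat.one_lt_cast (α := ℝ)).2 h1
        exact this
      rw [Tc_rec P hn]
      have hc0 : (0:ℝ) < (n:ℝ) * ((n:ℝ) - 1) := by nlinarith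
      have hconv := conv_bound hn (K := d+3) (by omega) (B := 2*A) (by positivity)
        (g := Tc P) (fun m hm => ih m hm)
      calc |(n:ℝ) * P n + 2 / ((n:ℝ) * ((n:ℝ) - 1)) *
              (3 * ∑ m ∈ Finset.Icc 0 (n-2), ((n:ℝ) - 1 - (m:ℕ)) * Tc P m)|
          ≤ |(n:ℝ) * P n| + |2 / ((n:ℝ) * ((n:ℝ) - 1)) *
              (3 * ∑ m ∈ Finset.Icc 0 (n-2), ((n:ℝ) - 1 - (m:ℕ)) * Tc P m)| := abs_add_le _ _
        _ ≤ (n:ℝ) * (A * ((n:ℝ)+1)^d) + (2 / ((n:ℝ) * ((n:ℝ) - 1))) * (3 *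
              ((2*A) * (n:ℝ)^2*((n:ℝ)-1)*((n:ℝ)+1)^(d+3-1)/12)) := by
            apply add_le_add
            · rw [abs_mul, Nat.abs_cast]
              exact mul_le_mul_of_nonneg_left (hPb n) (by positivity)
            · rw [abs_mul, abs_mul]
              have h2 : |2 / ((n:ℝ) * ((n:ℝ) - 1))| = 2 / ((n:ℝ) * ((n:ℝ) - 1)) :=
                abs_of_pos (by positivity)
              rw [h2, abs_of_nonneg (by norm_num : (0:ℝ) ≤ 3)]
              apply mul_le_mul_of_nonneg_left _ (by positivity)
              exact mul_le_mul_of_nonneg_left hconv (by norm_num)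
        _ ≤ A * ((n:ℝ)+1)^(d+3) + A * ((n:ℝ)+1)^(d+3) := by
            apply add_le_add
            · -- n * (A * (n+1)^d) ≤ A * (n+1)^(d+3)
              have hle : ((n:ℝ)+1)^d * (n:ℝ) ≤ ((n:ℝ)+1)^(d+1) := by
                rw [pow_succ]
                apply mul_le_mul_of_nonneg_left (by linarith) (by positivity)
              have hle2 : ((n:ℝ)+1)^(d+1) ≤ ((n:ℝ)+1)^(d+3) :=
                pow_le_pow_right₀ (by linarith) (by omega)
              calc (n:ℝ) * (A * ((n:ℝ)+1)^d) = A * (((n:ℝ)+1)^d * (n:ℝ)) := by ring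
                _ ≤ A * ((n:ℝ)+1)^(d+1) := mul_le_mul_of_nonneg_left hle (le_of_lt hA)
                _ ≤ A * ((n:ℝ)+1)^(d+3) := mul_le_mul_of_nonneg_left hle2 (le_of_lt hA)
            · -- (2/(n(n-1))) * (3 * (2A n²(n-1)(n+1)^{d+2}/12)) = A n (n+1)^{d+2} ≤ A (n+1)^{d+3}
              have hd2 : d + 3 - 1 = d + 2 := by omega
              rw [hd2]
              have heq : (2 / ((n:ℝ) * ((n:ℝ) - 1))) * (3 *
                  ((2*A) * (n:ℝ)^2*((n:ℝ)-1)*((n:ℝ)+1)^(d+2)/12))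
                  = A * (n:ℝ) * ((n:ℝ)+1)^(d+2) := by
                have hn1' : (n:ℝ) - 1 ≠ 0 := sub_ne_zero.mpr hn1.ne'
                field_simp
                ring
              rw [heq]
              have : (n:ℝ) * ((n:ℝ)+1)^(d+2) ≤ ((n:ℝ)+1)^(d+3) := by
                calc (n:ℝ) * ((n:ℝ)+1)^(d+2) ≤ ((n:ℝ)+1) * ((n:ℝ)+1)^(d+2) :=
                      mul_le_mul_of_nonneg_right (by linarith) (by positivity)
                  _ = ((n:ℝ)+1)^(d+3) := (pow_succ' _ _).symm
              calc A * (n:ℝ) * ((n:ℝ)+1)^(d+2) = A * ((n:ℝ) * ((n:ℝ)+1)^(d+2)) := by ring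
                _ ≤ A * ((n:ℝ)+1)^(d+3) := mul_le_mul_of_nonneg_left this (le_of_lt hA)
        _ = (2*A) * ((n:ℝ)+1)^(d+3) := by ring

lemma bound_b (P : ℕ → ℝ) (A : ℝ) (hA : 0 < A) (d : ℕ)
    (hPb : ∀ n : ℕ, |P n| ≤ A * ((n:ℝ)+1)^d) (n : ℕ) :
    |((n:ℝ)+1) * Tc P (n+1)| ≤ (2*A*2^(d+3)) * ((n:ℝ)+1)^(d+4) := by
  have h := Tc_bound P A hA d hPb (n+1)
  have hc : (((n+1:ℕ)):ℝ) + 1 = (n:ℝ) + 2 := by push_cast; ring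
  rw [hc] at h
  rw [abs_mul, abs_of_nonneg (by positivity : (0:ℝ) ≤ (n:ℝ)+1)]
  have h2 : ((n:ℝ)+2)^(d+3) ≤ 2^(d+3) * ((n:ℝ)+1)^(d+3) := by
    rw [← mul_pow]
    apply pow_le_pow_left₀ (by positivity)
    have : (0:ℝ) ≤ n := Nat.cast_nonneg n
    linarith
  have hA2 : (0:ℝ) ≤ 2*A := by linarith
  calc ((n:ℝ)+1) * |Tc P (n+1)|
      ≤ ((n:ℝ)+1) * (2*A * ((n:ℝ)+2)^(d+3)) :=
        mul_le_mul_of_nonneg_left h (by positivity)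
    _ ≤ ((n:ℝ)+1) * (2*A * (2^(d+3) * ((n:ℝ)+1)^(d+3))) := by
        apply mul_le_mul_of_nonneg_left (mul_le_mul_of_nonneg_left h2 hA2) (by positivity)
    _ = (2*A*2^(d+3)) * ((n:ℝ)+1)^(d+4) := by
        rw [show d+4 = (d+3)+1 from rfl, pow_succ]; ring

lemma bound_c (P : ℕ → ℝ) (A : ℝ) (hA : 0 < A) (d : ℕ)
    (hPb : ∀ n : ℕ, |P n| ≤ A * ((n:ℝ)+1)^d) (n : ℕ) :
    |((n:ℝ)+2)^2*((n:ℝ)+1)*P (n+2)| ≤ (A*3^(d+3)) * ((n:ℝ)+1)^(d+3) := by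
  have hb := hPb (n+2)
  have hc : (((n+2:ℕ)):ℝ) + 1 = (n:ℝ) + 3 := by push_cast; ring
  rw [hc] at hb
  have hn0 : (0:ℝ) ≤ n := Nat.cast_nonneg n
  rw [abs_mul, abs_mul, abs_pow, abs_of_nonneg (by linarith : (0:ℝ) ≤ (n:ℝ)+2),
    abs_of_nonneg (by linarith : (0:ℝ) ≤ (n:ℝ)+1)]
  have h1 : ((n:ℝ)+2)^2*((n:ℝ)+1) ≤ ((n:ℝ)+3)^3 := by nlinarith
  have h2 : ((n:ℝ)+3)^(d+3) ≤ 3^(d+3) * ((n:ℝ)+1)^(d+3) := by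
    rw [← mul_pow]
    apply pow_le_pow_left₀ (by linarith)
    linarith
  calc ((n:ℝ)+2)^2*((n:ℝ)+1)*|P (n+2)|
      ≤ ((n:ℝ)+3)^3 * |P (n+2)| := mul_le_mul_of_nonneg_right h1 (abs_nonneg _)
    _ ≤ ((n:ℝ)+3)^3 * (A * ((n:ℝ)+3)^d) := mul_le_mul_of_nonneg_left hb (by positivity)
    _ = A * ((n:ℝ)+3)^(d+3) := by rw [show d+3 = 3+d from by omega, pow_add]; ring
    _ ≤ A * (3^(d+3) * ((n:ℝ)+1)^(d+3)) := mul_le_mul_of_nonneg_left h2 hA.le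
    _ = (A*3^(d+3)) * ((n:ℝ)+1)^(d+3) := by ring

lemma bound_conv (P : ℕ → ℝ) (A : ℝ) (hA : 0 < A) (d : ℕ)
    (hPb : ∀ n : ℕ, |P n| ≤ A * ((n:ℝ)+1)^d) (n : ℕ) :
    |∑ m ∈ Finset.range (n+1), ((n:ℝ)+1-(m:ℕ)) * Tc P m| ≤ (2*A) * ((n:ℝ)+1)^(d+5) := by
  have hA2 : (0:ℝ) ≤ 2*A := by linarith
  refine (Finset.abs_sum_le_sum_abs _ _).trans ?_
  have hterm : ∀ m ∈ Finset.range (n+1),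
      |((n:ℝ)+1-(m:ℕ)) * Tc P m| ≤ ((n:ℝ)+1) * (2*A*((n:ℝ)+1)^(d+3)) := by
    intro m hm
    rw [Finset.mem_range] at hm
    have hmn : (m:ℝ) ≤ n := by exact_mod_cast Nat.lt_succ_iff.1 hm
    have hm0 : (0:ℝ) ≤ m := Nat.cast_nonneg m
    rw [abs_mul, abs_of_nonneg (by linarith : (0:ℝ) ≤ (n:ℝ)+1-(m:ℕ))]
    have h1 : (n:ℝ)+1-(m:ℕ) ≤ (n:ℝ)+1 := by linarith
    have h2 : |Tc P m| ≤ 2*A*((n:ℝ)+1)^(d+3) := by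
      refine (Tc_bound P A hA d hPb m).trans ?_
      apply mul_le_mul_of_nonneg_left _ hA2
      exact pow_le_pow_left₀ (by linarith) (by linarith) _
    exact mul_le_mul h1 h2 (abs_nonneg _) (by positivity)
  refine (Finset.sum_le_card_nsmul _ _ _ hterm).trans ?_
  rw [Finset.card_range, nsmul_eq_mul]
  push_cast
  apply le_of_eq
  rw [show d+5 = (d+3)+1+1 from rfl, pow_succ, pow_succ]
  ring
theorem grand_average_gf_ode (P : ℕ → ℝ) (hP0 : P 0 = 0) (hP1 : P 1 = 0)
    (A : ℝ) (hA : 0 < A) (d : ℕ) (hPbound : ∀ n : ℕ, |P n| ≤ A * ((n : ℝ) + 1) ^ d) :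
    (∀ z ∈ Set.Ioo (-1 : ℝ) 1,
        Summable (fun n : ℕ => |(∑ j ∈ Finset.Icc (1 : ℤ) (n : ℤ), qsCost P n j) * z ^ n|) ∧
        Summable (fun n : ℕ => |(n : ℝ) ^ 2 * ((n : ℝ) - 1) * P n * z ^ (n - 2)|)) ∧
    (∀ z ∈ Set.Ioo (-1 : ℝ) 1,
        DifferentiableAt ℝ
          (fun z : ℝ => ∑' n : ℕ, (∑ j ∈ Finset.Icc (1 : ℤ) (n : ℤ), qsCost P n j) * z ^ n) z ∧
        DifferentiableAt ℝ
          (deriv (fun z : ℝ =>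
            ∑' n : ℕ, (∑ j ∈ Finset.Icc (1 : ℤ) (n : ℤ), qsCost P n j) * z ^ n)) z) ∧
    (∀ z ∈ Set.Ioo (-1 : ℝ) 1,
        deriv (deriv (fun z : ℝ =>
            ∑' n : ℕ, (∑ j ∈ Finset.Icc (1 : ℤ) (n : ℤ), qsCost P n j) * z ^ n)) z =
          (∑' n : ℕ, (n : ℝ) ^ 2 * ((n : ℝ) - 1) * P n * z ^ (n - 2)) +
          6 / (1 - z) ^ 2 *
            ∑' n : ℕ, (∑ j ∈ Finset.Icc (1 : ℤ) (n : ℤ), qsCost P n j) * z ^ n) := by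
  have hfun : (fun z : ℝ => ∑' n : ℕ, (∑ j ∈ Finset.Icc (1 : ℤ) (n : ℤ), qsCost P n j) * z ^ n)
      = (fun z : ℝ => ∑' n : ℕ, Tc P n * z ^ n) := rfl
  have hTb : ∀ n : ℕ, |Tc P n| ≤ (2*A) * ((n:ℝ)+1)^(d+3) := Tc_bound P A hA d hPbound
  have hbb : ∀ n : ℕ, |((n:ℝ)+1) * Tc P (n+1)| ≤ (2*A*2^(d+3)) * ((n:ℝ)+1)^(d+4) :=
    bound_b P A hA d hPbound
  have hcb : ∀ n : ℕ, |((n:ℝ)+2)^2*((n:ℝ)+1)*P (n+2)| ≤ (A*3^(d+3)) * ((n:ℝ)+1)^(d+3) :=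
    bound_c P A hA d hPbound
  have hconvb : ∀ n : ℕ,
      |∑ m ∈ Finset.range (n+1), ((n:ℝ)+1-(m:ℕ)) * Tc P m| ≤ (2*A) * ((n:ℝ)+1)^(d+5) :=
    bound_conv P A hA d hPbound
  rw [hfun]
  -- summability of the shifted G-series
  have hGsum : ∀ z : ℝ, |z| < 1 →
      Summable (fun n : ℕ => |(n : ℝ) ^ 2 * ((n : ℝ) - 1) * P n * z ^ (n - 2)|) := by
    intro z hz
    apply (_root_.summable_nat_add_iff 2).1
    refine (summable_coeff_pow hcb hz).congr fun n => ?_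
    congr 1
    push_cast
    ring
  refine ⟨?_, ?_, ?_⟩
  · -- bullet 1
    intro z hz
    have hz1 : |z| < 1 := abs_lt.2 ⟨hz.1, hz.2⟩
    exact ⟨summable_coeff_pow hTb hz1, hGsum z hz1⟩
  · -- bullet 2
    intro z hz
    have hz1 : |z| < 1 := abs_lt.2 ⟨hz.1, hz.2⟩
    constructor
    · exact (hasDerivAt_ptsum (by linarith) hTb hz1).differentiableAt
    · have heq : deriv (fun z : ℝ => ∑' n : ℕ, Tc P n * z ^ n)
          =ᶠ[nhds z] (fun y : ℝ => ∑' n : ℕ, ((n:ℝ)+1) * Tc P (n+1) * y ^ n) := by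
        apply Filter.eventuallyEq_of_mem (isOpen_Ioo.mem_nhds hz)
        intro y hy
        exact (hasDerivAt_ptsum (by linarith) hTb (abs_lt.2 ⟨hy.1, hy.2⟩)).deriv
      rw [heq.differentiableAt_iff]
      exact (hasDerivAt_ptsum (a := fun n => ((n:ℝ)+1) * Tc P (n+1))
        (by positivity) hbb hz1).differentiableAt
  · -- bullet 3
    intro z hz
    rw [show (∑' n : ℕ, (∑ j ∈ Finset.Icc (1:ℤ) (n:ℤ), qsCost P n j) * z ^ n)
      = ∑' n : ℕ, Tc P n * z ^ n from rfl]
    have hz1 : |z| < 1 := abs_lt.2 ⟨hz.1, hz.2⟩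
    have hz1' : ‖z‖ < 1 := by rwa [Real.norm_eq_abs]
    have hzne : (1:ℝ) - z ≠ 0 := by
      have := hz.2; intro h; linarith
    have heq : deriv (fun z : ℝ => ∑' n : ℕ, Tc P n * z ^ n)
        =ᶠ[nhds z] (fun y : ℝ => ∑' n : ℕ, ((n:ℝ)+1) * Tc P (n+1) * y ^ n) := by
      apply Filter.eventuallyEq_of_mem (isOpen_Ioo.mem_nhds hz)
      intro y hy
      exact (hasDerivAt_ptsum (by linarith) hTb (abs_lt.2 ⟨hy.1, hy.2⟩)).deriv
    -- LHS: second derivative as a power series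
    have lhs_eq : deriv (deriv (fun z : ℝ => ∑' n : ℕ, Tc P n * z ^ n)) z
        = ∑' n : ℕ, (((n:ℝ)+1) * (((n:ℝ)+2) * Tc P (n+2))) * z ^ n := by
      rw [heq.deriv_eq]
      rw [(hasDerivAt_ptsum (a := fun n => ((n:ℝ)+1) * Tc P (n+1))
        (by positivity) hbb hz1).deriv]
      apply tsum_congr
      intro n
      push_cast
      ring
    rw [lhs_eq]
    -- RHS: rewrite the G-series by shifting twice
    have hGsummable : Summable (fun n : ℕ => (n : ℝ) ^ 2 * ((n : ℝ) - 1) * P n * z ^ (n - 2)) :=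
      (hGsum z hz1).of_abs
    have hGshift : (∑' n : ℕ, (n : ℝ) ^ 2 * ((n : ℝ) - 1) * P n * z ^ (n - 2))
        = ∑' n : ℕ, (((n:ℝ)+2)^2*((n:ℝ)+1)*P (n+2)) * z ^ n := by
      rw [Summable.tsum_eq_zero_add hGsummable]
      rw [Summable.tsum_eq_zero_add ((_root_.summable_nat_add_iff 1).2 hGsummable)]
      norm_num
      apply tsum_congr
      intro n
      push_cast
      rw [show n + 1 + 1 = n + 2 from by omega]
      ring
    -- Cauchy product
    have hsumTnorm : Summable fun n : ℕ => ‖Tc P n * z^n‖ := by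
      simp only [Real.norm_eq_abs]; exact summable_coeff_pow hTb hz1
    have hQb : ∀ n : ℕ, |((n:ℝ)+1)| ≤ (1:ℝ) * ((n:ℝ)+1)^1 := by
      intro n
      rw [abs_of_nonneg (by positivity), one_mul, pow_one]
    have hsumQnorm : Summable fun n : ℕ => ‖((n:ℝ)+1) * z^n‖ := by
      simp only [Real.norm_eq_abs]; exact summable_coeff_pow hQb hz1
    have hQ : (∑' n : ℕ, ((n:ℝ)+1) * z ^ n) = 1/(1-z)^2 := by
      have h1 : Summable (fun n : ℕ => (n:ℝ) * z^n) :=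
        (hasSum_coe_mul_geometric_of_norm_lt_one hz1').summable
      have h2 : Summable (fun n : ℕ => z^n) := summable_geometric_of_norm_lt_one hz1'
      calc (∑' n : ℕ, ((n:ℝ)+1) * z ^ n) = ∑' n : ℕ, ((n:ℝ) * z^n + z^n) :=
            tsum_congr fun n => by ring
        _ = z/(1-z)^2 + (1-z)⁻¹ := by
            rw [Summable.tsum_add h1 h2, tsum_coe_mul_geometric_of_norm_lt_one hz1',
              tsum_geometric_of_norm_lt_one hz1']
        _ = 1/(1-z)^2 := by field_simp; ring
    have hCauchy : (∑' n : ℕ, Tc P n * z ^ n) * (∑' n : ℕ, ((n:ℝ)+1) * z ^ n)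
        = ∑' n : ℕ, (∑ m ∈ Finset.range (n+1), ((n:ℝ)+1-(m:ℕ)) * Tc P m) * z ^ n := by
      rw [tsum_mul_tsum_eq_tsum_sum_antidiagonal_of_summable_norm hsumTnorm hsumQnorm]
      apply tsum_congr
      intro n
      rw [Finset.Nat.sum_antidiagonal_eq_sum_range_succ_mk, Finset.sum_mul]
      apply Finset.sum_congr rfl
      intro m hm
      rw [Finset.mem_range] at hm
      have hmn : m ≤ n := Nat.lt_succ_iff.1 hm
      have hzpow : z^m * z^(n-m) = z^n := by rw [← pow_add]; congr 1; omega
      have hcast : ((n-m : ℕ):ℝ) = (n:ℝ) - (m:ℝ) := by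
        push_cast [Nat.cast_sub hmn]; ring
      rw [hcast, ← hzpow]
      ring
    have hsum_c : Summable fun n : ℕ => (((n:ℝ)+2)^2*((n:ℝ)+1)*P (n+2)) * z ^ n :=
      (summable_coeff_pow hcb hz1).of_abs
    have hsum_conv : Summable fun n : ℕ =>
        (∑ m ∈ Finset.range (n+1), ((n:ℝ)+1-(m:ℕ)) * Tc P m) * z ^ n :=
      (summable_coeff_pow hconvb hz1).of_abs
    rw [hGshift]
    have h6 : 6 / (1-z)^2 * (∑' n : ℕ, Tc P n * z ^ n)
        = ∑' n : ℕ, 6 * ((∑ m ∈ Finset.range (n+1), ((n:ℝ)+1-(m:ℕ)) * Tc P m) * z ^ n) := by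
      calc 6 / (1-z)^2 * (∑' n : ℕ, Tc P n * z ^ n)
          = 6 * ((∑' n : ℕ, Tc P n * z ^ n) * (1/(1-z)^2)) := by ring
        _ = 6 * ((∑' n : ℕ, Tc P n * z ^ n) * (∑' n : ℕ, ((n:ℝ)+1) * z ^ n)) := by rw [hQ]
        _ = 6 * ∑' n : ℕ, (∑ m ∈ Finset.range (n+1), ((n:ℝ)+1-(m:ℕ)) * Tc P m) * z ^ n := by
            rw [hCauchy]
        _ = ∑' n : ℕ, 6 * ((∑ m ∈ Finset.range (n+1), ((n:ℝ)+1-(m:ℕ)) * Tc P m) * z ^ n) :=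
            tsum_mul_left.symm
    rw [h6, ← Summable.tsum_add hsum_c (hsum_conv.mul_left 6)]
    apply tsum_congr
    intro n
    have hk := Tc_key P n
    linear_combination z^n * hk
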